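/- For δ(t) = t^α with α ∈ (1,2] and d = 2, the density c_δ(u,v) = (α/4)·((2 - α u^{α-1})/(1-u^{α-1})^{α/(2α-2)})·v^{α-2}(1-v^{α-1})^{(2-α)/(2α-2)} for 0 < u ≤ v < 1 (extended symmetrically) integrates to uniform marginals: ∫_{[0,1]^2} c_δ(u,v) 1{u ≤ r} du dv = r for all r ∈ [0,1]. In particular when α = 2, c_δ ≡ 1. -/

import Mathlib

open MeasureTheory Set Real

namespace PowerDiag

noncomputable def aF (α u : ℝ) : ℝ :=
  (α / 4) * ((2 - α * u ^ (α - 1)) / (1 - u ^ (α - 1)) ^ (α / (2 * α - 2)))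

noncomputable def bF (α v : ℝ) : ℝ :=
  v ^ (α - 2) * (1 - v ^ (α - 1)) ^ ((2 - α) / (2 * α - 2))

variable {α u v : ℝ}

lemma p_pos (h1 : 1 < α) : 0 < α / (2 * α - 2) := div_pos (by linarith) (by linarith)

lemma q_nonneg (h1 : 1 < α) (h2 : α ≤ 2) : 0 ≤ (2 - α) / (2 * α - 2) :=
  div_nonneg (by linarith) (by linarith)

lemma w_lt_one (h1 : 1 < α) (hv0 : 0 ≤ v) (hv1 : v < 1) : v ^ (α - 1) < 1 :=
  Real.rpow_lt_one hv0 hv1 (by linarith)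

lemma w_le_one (h1 : 1 < α) (hv0 : 0 ≤ v) (hv1 : v ≤ 1) : v ^ (α - 1) ≤ 1 :=
  Real.rpow_le_one hv0 hv1 (by linarith)

lemma base_pos (h1 : 1 < α) (hv0 : 0 ≤ v) (hv1 : v < 1) : 0 < 1 - v ^ (α - 1) := by
  have := w_lt_one (v := v) h1 hv0 hv1; linarith

lemma cont_w (h1 : 1 < α) : Continuous fun t : ℝ => t ^ (α - 1) :=
  continuous_iff_continuousAt.mpr fun x =>
    Real.continuousAt_rpow_const x _ (Or.inr (by linarith))

lemma contOn_aF (h1 : 1 < α) (hu1 : u < 1) : ContinuousOn (aF α) (Icc 0 u) := by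
  intro x hx
  have hx1 : x < 1 := lt_of_le_of_lt hx.2 hu1
  have hb : (0:ℝ) < 1 - x ^ (α - 1) := base_pos h1 hx.1 hx1
  have hW : ContinuousAt (fun t : ℝ => 1 - t ^ (α - 1)) x :=
    continuousAt_const.sub ((cont_w h1).continuousAt)
  have hden : ContinuousAt (fun t : ℝ => (1 - t ^ (α - 1)) ^ (α / (2 * α - 2))) x :=
    hW.rpow_const (Or.inl hb.ne')
  have hdenne : (1 - x ^ (α - 1)) ^ (α / (2 * α - 2)) ≠ 0 :=
    (Real.rpow_pos_of_pos hb _).ne'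
  exact (continuousAt_const.mul
    ((continuousAt_const.sub (continuousAt_const.mul (cont_w h1).continuousAt)).div
      hden hdenne)).continuousWithinAt

lemma contOn_bF (h1 : 1 < α) (h2 : α ≤ 2) (hu0 : 0 < u) : ContinuousOn (bF α) (Icc u 1) := by
  intro x hx
  have hx0 : (0:ℝ) < x := lt_of_lt_of_le hu0 hx.1
  have hpow : ContinuousAt (fun t : ℝ => t ^ (α - 2)) x :=
    Real.continuousAt_rpow_const x _ (Or.inl hx0.ne')
  have hW : ContinuousAt (fun t : ℝ => 1 - t ^ (α - 1)) x :=
    continuousAt_const.sub ((cont_w h1).continuousAt)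
  exact (hpow.mul (hW.rpow_const (Or.inr (q_nonneg h1 h2)))).continuousWithinAt

lemma hasDerivAt_base (hv : 0 < v) :
    HasDerivAt (fun t : ℝ => 1 - t ^ (α - 1)) (-((α - 1) * v ^ (α - 2))) v := by
  have h := (Real.hasDerivAt_rpow_const (x := v) (p := α - 1) (Or.inl hv.ne'))
  have h2 := h.const_sub (1:ℝ)
  simpa [show α - 1 - 1 = α - 2 by ring] using h2

lemma hvv' (hu0 : 0 < u) : u * u ^ (α - 2) = u ^ (α - 1) := by
  nth_rewrite 1 [← Real.rpow_one u]
  rw [← Real.rpow_add hu0]; ring_nf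

lemma hasDerivAt_A (h1 : 1 < α) (h2 : α ≤ 2) (hv : 0 < v) (hv1 : v < 1) :
    HasDerivAt (fun t : ℝ => (α / 2) * t * (1 - t ^ (α - 1)) ^ (-((2 - α) / (2 * α - 2))))
      (aF α v) v := by
  have hb : (0:ℝ) < 1 - v ^ (α - 1) := base_pos h1 hv.le hv1
  have hA : HasDerivAt (fun t : ℝ => (α / 2) * t) (α / 2) v := by
    simpa using (hasDerivAt_id v).const_mul (α / 2)
  have hB : HasDerivAt (fun t : ℝ => (1 - t ^ (α - 1)) ^ (-((2 - α) / (2 * α - 2))))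
      ((-((α - 1) * v ^ (α - 2))) * (-((2 - α) / (2 * α - 2))) *
        (1 - v ^ (α - 1)) ^ (-((2 - α) / (2 * α - 2)) - 1)) v :=
    (hasDerivAt_base hv).rpow_const (Or.inl hb.ne')
  have h := hA.mul hB
  refine h.congr_deriv ?_
  have hd : (2:ℝ) * α - 2 ≠ 0 := by linarith
  have hexp : -((2 - α) / (2 * α - 2)) - 1 = -(α / (2 * α - 2)) := by
    rw [show (1:ℝ) = (2 * α - 2) / (2 * α - 2) from (div_self hd).symm]; ring
  have hsplit : (1 - v ^ (α - 1)) ^ (-((2 - α) / (2 * α - 2)))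
      = (1 - v ^ (α - 1)) ^ (-((2 - α) / (2 * α - 2)) - 1) * (1 - v ^ (α - 1)) := by
    rw [← Real.rpow_add_one hb.ne' (-((2 - α) / (2 * α - 2)) - 1)]; ring_nf
  have hvv : v * v ^ (α - 2) = v ^ (α - 1) := hvv' hv
  have hdiv : (2 - α * v ^ (α - 1)) / (1 - v ^ (α - 1)) ^ (α / (2 * α - 2))
      = (2 - α * v ^ (α - 1)) * (1 - v ^ (α - 1)) ^ (-(α / (2 * α - 2))) := by
    rw [Real.rpow_neg hb.le, div_eq_mul_inv]
  rw [aF, hdiv, ← hexp, hsplit]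
  set X := (1 - v ^ (α - 1)) ^ (-((2 - α) / (2 * α - 2)) - 1) with hX
  have hq : (α - 1) * ((2 - α) / (2 * α - 2)) = (2 - α) / 2 := by
    have ha1 : α - 1 ≠ 0 := by linarith
    field_simp
  have hrw : α / 2 * v * (-((α - 1) * v ^ (α - 2)) * -((2 - α) / (2 * α - 2)) * X)
      = α / 2 * (v * v ^ (α - 2)) * ((α - 1) * ((2 - α) / (2 * α - 2))) * X := by ring
  rw [hrw, hvv, hq]
  ring

lemma hasDerivAt_B (h1 : 1 < α) (hv : 0 < v) (hv1 : v < 1) :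
    HasDerivAt (fun t : ℝ => -(2 / α) * (1 - t ^ (α - 1)) ^ (α / (2 * α - 2))) (bF α v) v := by
  have hb : (0:ℝ) < 1 - v ^ (α - 1) := base_pos h1 hv.le hv1
  have h := ((hasDerivAt_base (α := α) hv).rpow_const
    (p := α / (2 * α - 2)) (Or.inl hb.ne')).const_mul (-(2 / α))
  refine h.congr_deriv ?_
  have hα : α ≠ 0 := by linarith
  have hd : (2:ℝ) * α - 2 ≠ 0 := by linarith
  have hexp : (2 - α) / (2 * α - 2) = α / (2 * α - 2) - 1 := by
    rw [show (1:ℝ) = (2 * α - 2) / (2 * α - 2) from (div_self hd).symm]; ring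
  rw [bF, hexp]
  have ha1 : α - 1 ≠ 0 := by linarith
  field_simp

lemma integral_aF (h1 : 1 < α) (h2 : α ≤ 2) (hu0 : 0 < u) (hu1 : u < 1) :
    ∫ t in (0:ℝ)..u, aF α t
      = (α / 2) * u * (1 - u ^ (α - 1)) ^ (-((2 - α) / (2 * α - 2))) := by
  have hcont : ContinuousOn
      (fun t : ℝ => (α / 2) * t * (1 - t ^ (α - 1)) ^ (-((2 - α) / (2 * α - 2)))) (Icc 0 u) := by
    intro x hx
    have hb : (0:ℝ) < 1 - x ^ (α - 1) := base_pos h1 hx.1 (lt_of_le_of_lt hx.2 hu1)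
    exact ((continuousAt_const.mul continuousAt_id).mul
      ((continuousAt_const.sub (cont_w h1).continuousAt).rpow_const
        (Or.inl hb.ne'))).continuousWithinAt
  have hderiv : ∀ x ∈ Ioo 0 u, HasDerivWithinAt
      (fun t : ℝ => (α / 2) * t * (1 - t ^ (α - 1)) ^ (-((2 - α) / (2 * α - 2))))
      (aF α x) (Ioi x) x :=
    fun x hx => (hasDerivAt_A h1 h2 hx.1 (hx.2.trans hu1)).hasDerivWithinAt
  have hint : IntervalIntegrable (aF α) volume 0 u :=
    (contOn_aF h1 hu1).intervalIntegrable_of_Icc hu0.le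
  rw [intervalIntegral.integral_eq_sub_of_hasDeriv_right_of_le hu0.le hcont hderiv hint]
  simp

lemma integral_bF (h1 : 1 < α) (h2 : α ≤ 2) (hu0 : 0 < u) (hu1 : u < 1) :
    ∫ t in u..(1:ℝ), bF α t = (2 / α) * (1 - u ^ (α - 1)) ^ (α / (2 * α - 2)) := by
  have hcont : ContinuousOn
      (fun t : ℝ => -(2 / α) * (1 - t ^ (α - 1)) ^ (α / (2 * α - 2))) (Icc u 1) := by
    intro x _
    exact (continuousAt_const.mul
      ((continuousAt_const.sub (cont_w h1).continuousAt).rpow_const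
        (Or.inr (p_pos h1).le))).continuousWithinAt
  have hderiv : ∀ x ∈ Ioo u 1, HasDerivWithinAt
      (fun t : ℝ => -(2 / α) * (1 - t ^ (α - 1)) ^ (α / (2 * α - 2)))
      (bF α x) (Ioi x) x :=
    fun x hx => (hasDerivAt_B h1 (hu0.trans hx.1) hx.2).hasDerivWithinAt
  have hint : IntervalIntegrable (bF α) volume u 1 :=
    (contOn_bF h1 h2 hu0).intervalIntegrable_of_Icc hu1.le
  rw [intervalIntegral.integral_eq_sub_of_hasDeriv_right_of_le hu1.le hcont hderiv hint]
  rw [Real.one_rpow]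
  simp [Real.zero_rpow (p_pos h1).ne']

lemma intInt_left (h1 : 1 < α) (h2 : α ≤ 2) (hu0 : 0 < u) (hu1 : u < 1)
    (f : ℝ → ℝ) (hf : ∀ v, f v = if u ≤ v then aF α u * bF α v else aF α v * bF α u) :
    IntervalIntegrable f volume 0 u := by
  rw [intervalIntegrable_iff_integrableOn_Icc_of_le hu0.le]
  have hcont : ContinuousOn (fun x => aF α x * bF α u) (Icc 0 u) :=
    (contOn_aF h1 hu1).mul continuousOn_const
  refine (hcont.integrableOn_Icc).congr_fun ?_ measurableSet_Icc
  intro x hx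
  rw [hf x]
  by_cases h : u ≤ x
  · have hxu : x = u := le_antisymm hx.2 h
    rw [if_pos h, hxu]
  · rw [if_neg h]

lemma intInt_right (h1 : 1 < α) (h2 : α ≤ 2) (hu0 : 0 < u) (hu1 : u < 1)
    (f : ℝ → ℝ) (hf : ∀ v, f v = if u ≤ v then aF α u * bF α v else aF α v * bF α u) :
    IntervalIntegrable f volume u 1 := by
  rw [intervalIntegrable_iff_integrableOn_Icc_of_le hu1.le]
  have hcont : ContinuousOn (fun x => aF α u * bF α x) (Icc u 1) :=
    continuousOn_const.mul (contOn_bF h1 h2 hu0)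
  refine (hcont.integrableOn_Icc).congr_fun ?_ measurableSet_Icc
  intro x hx
  rw [hf x, if_pos hx.1]

lemma slice_integrable (h1 : 1 < α) (h2 : α ≤ 2) (hu0 : 0 < u) (hu1 : u < 1)
    (f : ℝ → ℝ) (hf : ∀ v, f v = if u ≤ v then aF α u * bF α v else aF α v * bF α u) :
    IntegrableOn f (Icc 0 1) volume := by
  have hA := (intervalIntegrable_iff_integrableOn_Icc_of_le hu0.le).mp
    (intInt_left h1 h2 hu0 hu1 f hf)
  have hB := (intervalIntegrable_iff_integrableOn_Icc_of_le hu1.le).mp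
    (intInt_right h1 h2 hu0 hu1 f hf)
  have := hA.union hB
  rwa [Set.Icc_union_Icc_eq_Icc hu0.le hu1.le] at this

lemma marginal_one (h1 : 1 < α) (h2 : α ≤ 2) (hu0 : 0 < u) (hu1 : u < 1)
    (f : ℝ → ℝ) (hf : ∀ v, f v = if u ≤ v then aF α u * bF α v else aF α v * bF α u) :
    ∫ v in Icc (0:ℝ) 1, f v = 1 := by
  have hb : (0:ℝ) < 1 - u ^ (α - 1) := base_pos h1 hu0.le hu1
  have e0 : ∫ v in Icc (0:ℝ) 1, f v = ∫ v in (0:ℝ)..1, f v := by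
    rw [intervalIntegral.integral_of_le (by norm_num : (0:ℝ) ≤ 1),
      ← MeasureTheory.integral_Icc_eq_integral_Ioc]
  have hsplit : (∫ v in (0:ℝ)..u, f v) + ∫ v in u..(1:ℝ), f v = ∫ v in (0:ℝ)..1, f v :=
    intervalIntegral.integral_add_adjacent_intervals
      (intInt_left h1 h2 hu0 hu1 f hf) (intInt_right h1 h2 hu0 hu1 f hf)
  have e1 : ∫ v in (0:ℝ)..u, f v = (∫ v in (0:ℝ)..u, aF α v) * bF α u := by
    rw [← intervalIntegral.integral_mul_const]
    apply intervalIntegral.integral_congr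
    intro x hx
    rw [Set.uIcc_of_le hu0.le] at hx
    rw [hf x]
    by_cases h : u ≤ x
    · have hxu : x = u := le_antisymm hx.2 h
      rw [if_pos h, hxu]
    · rw [if_neg h]
  have e2 : ∫ v in u..(1:ℝ), f v = aF α u * ∫ v in u..(1:ℝ), bF α v := by
    rw [← intervalIntegral.integral_const_mul]
    apply intervalIntegral.integral_congr
    intro x hx
    rw [Set.uIcc_of_le hu1.le] at hx
    rw [hf x, if_pos hx.1]
  rw [e0, ← hsplit, e1, e2, integral_aF h1 h2 hu0 hu1, integral_bF h1 h2 hu0 hu1]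
  rw [aF, bF]
  have hαne : α ≠ 0 := by linarith
  have hcancel : (1 - u ^ (α - 1)) ^ (-((2 - α) / (2 * α - 2)))
      * (1 - u ^ (α - 1)) ^ ((2 - α) / (2 * α - 2)) = 1 := by
    rw [← Real.rpow_add hb]; norm_num
  have hDne : (1 - u ^ (α - 1)) ^ (α / (2 * α - 2)) ≠ 0 :=
    (Real.rpow_pos_of_pos hb _).ne'
  have t1 : α / 2 * u * (1 - u ^ (α - 1)) ^ (-((2 - α) / (2 * α - 2)))
        * (u ^ (α - 2) * (1 - u ^ (α - 1)) ^ ((2 - α) / (2 * α - 2)))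
      = α / 2 * u ^ (α - 1) := by
    calc α / 2 * u * (1 - u ^ (α - 1)) ^ (-((2 - α) / (2 * α - 2)))
          * (u ^ (α - 2) * (1 - u ^ (α - 1)) ^ ((2 - α) / (2 * α - 2)))
        = α / 2 * (u * u ^ (α - 2)) * ((1 - u ^ (α - 1)) ^ (-((2 - α) / (2 * α - 2)))
          * (1 - u ^ (α - 1)) ^ ((2 - α) / (2 * α - 2))) := by ring
      _ = α / 2 * u ^ (α - 1) := by rw [hvv' hu0, hcancel, mul_one]
  have hdm : (2 - α * u ^ (α - 1)) / (1 - u ^ (α - 1)) ^ (α / (2 * α - 2))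
      * (1 - u ^ (α - 1)) ^ (α / (2 * α - 2)) = 2 - α * u ^ (α - 1) :=
    div_mul_cancel₀ _ hDne
  have t2 : α / 4 * ((2 - α * u ^ (α - 1)) / (1 - u ^ (α - 1)) ^ (α / (2 * α - 2)))
        * (2 / α * (1 - u ^ (α - 1)) ^ (α / (2 * α - 2)))
      = (2 - α * u ^ (α - 1)) / 2 := by
    calc α / 4 * ((2 - α * u ^ (α - 1)) / (1 - u ^ (α - 1)) ^ (α / (2 * α - 2)))
          * (2 / α * (1 - u ^ (α - 1)) ^ (α / (2 * α - 2)))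
        = α / 4 * (2 / α) * ((2 - α * u ^ (α - 1)) / (1 - u ^ (α - 1)) ^ (α / (2 * α - 2))
          * (1 - u ^ (α - 1)) ^ (α / (2 * α - 2))) := by ring
      _ = α / 4 * (2 / α) * (2 - α * u ^ (α - 1)) := by rw [hdm]
      _ = (2 - α * u ^ (α - 1)) / 2 := by field_simp; ring
  rw [t1, t2]
  ring

lemma aF_nonneg (h1 : 1 < α) (h2 : α ≤ 2) (h0 : 0 ≤ u) (hle : u ≤ 1) : 0 ≤ aF α u := by
  have hw1 : u ^ (α - 1) ≤ 1 := w_le_one h1 h0 hle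
  have hw0 : 0 ≤ u ^ (α - 1) := Real.rpow_nonneg h0 _
  apply mul_nonneg (by linarith)
  apply div_nonneg
  · nlinarith
  · exact Real.rpow_nonneg (by linarith) _

lemma bF_nonneg (h1 : 1 < α) (h2 : α ≤ 2) (h0 : 0 ≤ v) (hle : v ≤ 1) : 0 ≤ bF α v := by
  have hw1 : v ^ (α - 1) ≤ 1 := w_le_one h1 h0 hle
  exact mul_nonneg (Real.rpow_nonneg h0 _) (Real.rpow_nonneg (by linarith) _)

end PowerDiag

set_option maxHeartbeats 1000000 in
/-- For δ(t) = t^α, α ∈ (1,2], d = 2, the maximum entropy density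
c_δ(u,v) = (α/4)·((2-αu^{α-1})/(1-u^{α-1})^{α/(2α-2)})·v^{α-2}(1-v^{α-1})^{(2-α)/(2α-2)}
(for u ≤ v, extended symmetrically) has uniform marginals; for α = 2 it is ≡ 1. -/
theorem power_diagonal_density_marginals
    (α : ℝ) (hα : α ∈ Set.Ioc (1:ℝ) 2)
    (g : ℝ → ℝ → ℝ)
    (hg : ∀ u v : ℝ, g u v = (α / 4) *
      ((2 - α * u ^ (α - 1)) / (1 - u ^ (α - 1)) ^ (α / (2 * α - 2))) *
      v ^ (α - 2) * (1 - v ^ (α - 1)) ^ ((2 - α) / (2 * α - 2)))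
    (c : ℝ × ℝ → ℝ)
    (hc : ∀ p, c p = if p.1 ≤ p.2 then g p.1 p.2 else g p.2 p.1) :
    (∀ r ∈ Set.Icc (0:ℝ) 1,
      (∫ p in (Set.Icc (0:ℝ) 1 ×ˢ Set.Icc (0:ℝ) 1),
        c p * (if p.1 ≤ r then 1 else 0)) = r) ∧
    (α = 2 → ∀ p ∈ (Set.Ioo (0:ℝ) 1 ×ˢ Set.Ioo (0:ℝ) 1), c p = 1) := by
  obtain ⟨h1, h2⟩ := hα
  have hgab : ∀ u v : ℝ, g u v = PowerDiag.aF α u * PowerDiag.bF α v := by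
    intro u v; rw [hg, PowerDiag.aF, PowerDiag.bF]; ring
  have hcform : ∀ x y : ℝ, c (x, y)
      = if x ≤ y then PowerDiag.aF α x * PowerDiag.bF α y
        else PowerDiag.aF α y * PowerDiag.bF α x := by
    intro x y
    rw [hc (x, y)]
    split_ifs <;> rw [hgab]
  constructor
  · intro r hr
    have hmc : Measurable c := by
      have hceq : c = fun p : ℝ × ℝ =>
          if p.1 ≤ p.2 then PowerDiag.aF α p.1 * PowerDiag.bF α p.2
          else PowerDiag.aF α p.2 * PowerDiag.bF α p.1 := by
        funext p
        rw [hc p]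
        split_ifs <;> rw [hgab]
      rw [hceq]
      have hrp : ∀ y : ℝ, Measurable (fun x : ℝ => x ^ y) := fun y => by measurability
      have hw : Measurable fun t : ℝ => t ^ (α - 1) := hrp _
      have haF : Measurable (PowerDiag.aF α) := by
        unfold PowerDiag.aF
        exact ((measurable_const.sub (hw.const_mul α)).div
          ((hrp _).comp (measurable_const.sub hw))).const_mul (α / 4)
      have hbF : Measurable (PowerDiag.bF α) := by
        unfold PowerDiag.bF
        exact (hrp _).mul ((hrp _).comp (measurable_const.sub hw))
      exact Measurable.ite (measurableSet_le measurable_fst measurable_snd)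
        ((haF.comp measurable_fst).mul (hbF.comp measurable_snd))
        ((haF.comp measurable_snd).mul (hbF.comp measurable_fst))
    have hmF : Measurable (fun p : ℝ × ℝ => c p * (if p.1 ≤ r then (1:ℝ) else 0)) :=
      hmc.mul (Measurable.ite (measurableSet_le measurable_fst measurable_const)
        measurable_const measurable_const)
    have hae0 : ∀ᵐ x : ℝ, x ∉ ({0, 1} : Set ℝ) :=
      ((Set.countable_singleton (1:ℝ)).insert 0).ae_notMem volume
    have hmemIoo : ∀ x : ℝ, x ∉ ({0, 1} : Set ℝ) → x ∈ Icc (0:ℝ) 1 → x ∈ Ioo (0:ℝ) 1 := by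
      intro x hx hxI
      simp only [Set.mem_insert_iff, Set.mem_singleton_iff, not_or] at hx
      exact ⟨lt_of_le_of_ne hxI.1 (Ne.symm hx.1), lt_of_le_of_ne hxI.2 hx.2⟩
    have haeI : ∀ᵐ x ∂(volume.restrict (Icc (0:ℝ) 1)), x ∈ Ioo (0:ℝ) 1 := by
      rw [ae_restrict_iff' measurableSet_Icc]
      filter_upwards [hae0] with x hx hxI
      exact hmemIoo x hx hxI
    have hslice : ∀ x ∈ Ioo (0:ℝ) 1, IntegrableOn (fun y => c (x, y)) (Icc 0 1) volume :=
      fun x hx => PowerDiag.slice_integrable h1 h2 hx.1 hx.2 _ (fun v => hcform x v)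
    have hmarg : ∀ x ∈ Ioo (0:ℝ) 1, ∫ y in Icc (0:ℝ) 1, c (x, y) = 1 :=
      fun x hx => PowerDiag.marginal_one h1 h2 hx.1 hx.2 _ (fun v => hcform x v)
    have hcnn : ∀ x ∈ Ioo (0:ℝ) 1, ∀ y ∈ Icc (0:ℝ) 1, 0 ≤ c (x, y) := by
      intro x hx y hy
      rw [hcform]
      have h1x := PowerDiag.aF_nonneg h1 h2 hx.1.le hx.2.le
      have h2x := PowerDiag.bF_nonneg h1 h2 hx.1.le hx.2.le
      have h1y := PowerDiag.aF_nonneg h1 h2 hy.1 hy.2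
      have h2y := PowerDiag.bF_nonneg h1 h2 hy.1 hy.2
      split_ifs
      · exact mul_nonneg h1x h2y
      · exact mul_nonneg h1y h2x
    have hindnn : (0:ℝ) ≤ if r < r then 1 else 0 := by split_ifs <;> norm_num
    have hnormint : ∀ x ∈ Ioo (0:ℝ) 1,
        (∫ y in Icc (0:ℝ) 1, ‖c (x, y) * (if x ≤ r then (1:ℝ) else 0)‖)
          = (if x ≤ r then (1:ℝ) else 0) := by
      intro x hx
      have heq : EqOn (fun y => ‖c (x, y) * (if x ≤ r then (1:ℝ) else 0)‖)
          (fun y => c (x, y) * (if x ≤ r then (1:ℝ) else 0)) (Icc (0:ℝ) 1) := by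
        intro y hy
        simp only
        rw [Real.norm_of_nonneg]
        exact mul_nonneg (hcnn x hx y hy) (by split_ifs <;> norm_num)
      rw [setIntegral_congr_fun measurableSet_Icc heq, integral_mul_const,
        hmarg x hx, one_mul]
    have hInt : IntegrableOn (fun p : ℝ × ℝ => c p * (if p.1 ≤ r then (1:ℝ) else 0))
        (Icc (0:ℝ) 1 ×ˢ Icc (0:ℝ) 1) (volume.prod volume) := by
      rw [IntegrableOn, ← Measure.prod_restrict]
      refine (MeasureTheory.integrable_prod_iff hmF.aestronglyMeasurable).mpr ⟨?_, ?_⟩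
      · filter_upwards [haeI] with x hx
        exact (hslice x hx).mul_const (if x ≤ r then (1:ℝ) else 0)
      · have hone : Integrable (fun _ : ℝ => (1:ℝ)) (volume.restrict (Icc (0:ℝ) 1)) := by
          refine integrableOn_const ?_
          rw [Real.volume_Icc]
          exact ENNReal.ofReal_ne_top
        refine hone.mono' (hmF.aestronglyMeasurable.norm.integral_prod_right') ?_
        filter_upwards [haeI] with x hx
        rw [hnormint x hx, Real.norm_of_nonneg (by split_ifs <;> norm_num)]
        split_ifs <;> norm_num
    rw [MeasureTheory.Measure.volume_eq_prod, MeasureTheory.setIntegral_prod _ hInt]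
    have hinner : ∫ x in Icc (0:ℝ) 1,
          (∫ y in Icc (0:ℝ) 1, c (x, y) * (if x ≤ r then (1:ℝ) else 0))
        = ∫ x in Icc (0:ℝ) 1, (if x ≤ r then (1:ℝ) else 0) := by
      apply setIntegral_congr_ae measurableSet_Icc
      filter_upwards [hae0] with x hx hxI
      have hxo := hmemIoo x hx hxI
      rw [integral_mul_const, hmarg x hxo, one_mul]
    rw [hinner]
    have hind : (fun x : ℝ => if x ≤ r then (1:ℝ) else 0)
        = fun x => Set.indicator (Iic r) (fun _ => (1:ℝ)) x := by
      funext x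
      rw [Set.indicator_apply]
      simp [Set.mem_Iic]
    rw [hind, setIntegral_indicator measurableSet_Iic]
    have hset : Icc (0:ℝ) 1 ∩ Iic r = Icc 0 r := by
      ext z
      simp only [Set.mem_inter_iff, Set.mem_Icc, Set.mem_Iic]
      constructor
      · rintro ⟨⟨hz0, _⟩, hzr⟩; exact ⟨hz0, hzr⟩
      · rintro ⟨hz0, hzr⟩; exact ⟨⟨hz0, hzr.trans hr.2⟩, hzr⟩
    rw [hset, setIntegral_const, Real.volume_real_Icc, smul_eq_mul, mul_one, sub_zero,
      max_eq_left hr.1]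
  · intro hα2 p hp
    have key : ∀ x y : ℝ, x ∈ Ioo (0:ℝ) 1 → g x y = 1 := by
      intro x y hx
      have hne : (1:ℝ) - x ≠ 0 := by
        have := hx.2; intro h; linarith
      rw [hg, hα2]
      norm_num
      field_simp
    rw [hc]
    split_ifs
    · exact key p.1 p.2 hp.1
    · exact key p.2 p.1 hp.2
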